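/- Let f : ℂ × ℂ → ℂ be entire, i.e. analytic on all of ℂ². If the set {(s,t) ∈ ℝ × ℝ : f(s,t) = 0} of real zeros of f has positive two-dimensional Lebesgue measure, then f is identically zero on ℂ². -/

import Mathlib

open MeasureTheory

/-- One-variable auxiliary lemma: an entire function on `ℂ` vanishing on a set of real
numbers of positive Lebesgue measure vanishes identically. -/
lemma aux_entire_eq_zero (g : ℂ → ℂ) (hg : AnalyticOnNhd ℂ g Set.univ)
    (S : Set ℝ) (hS : 0 < volume S) (hz : ∀ x ∈ S, g x = 0) : ∀ z : ℂ, g z = 0 := by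
  -- find a bounded piece of S with positive measure
  have hcover : S ⊆ ⋃ n : ℕ, S ∩ Set.Icc (-(n : ℝ)) n := by
    intro x hx
    obtain ⟨n, hn⟩ := exists_nat_ge |x|
    exact Set.mem_iUnion.2 ⟨n, hx, by
      constructor
      · linarith [neg_abs_le x]
      · linarith [le_abs_self x]⟩
  have : ∃ n : ℕ, volume (S ∩ Set.Icc (-(n : ℝ)) n) ≠ 0 := by
    by_contra hc
    push_neg at hc
    have h0 : volume S = 0 := by
      refine le_antisymm ?_ (zero_le)
      calc volume S ≤ volume (⋃ n : ℕ, S ∩ Set.Icc (-(n : ℝ)) n) := measure_mono hcover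
        _ ≤ ∑' n : ℕ, volume (S ∩ Set.Icc (-(n : ℝ)) n) := measure_iUnion_le _
        _ = 0 := by simp [hc]
    exact absurd h0 (ne_of_gt hS)
  obtain ⟨n, hn⟩ := this
  set T := S ∩ Set.Icc (-(n : ℝ)) n with hT
  have hTinf : T.Infinite := by
    intro hfin
    exact hn (Set.Finite.measure_zero hfin volume)
  obtain ⟨x, -, hx⟩ := hTinf.exists_accPt_of_subset_isCompact isCompact_Icc
    Set.inter_subset_right
  rw [accPt_iff_frequently] at hx
  -- transfer frequently to ℂ
  have htendsto : Filter.Tendsto (fun y : ℝ => (y : ℂ)) (nhdsWithin x ({x} : Set ℝ)ᶜ)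
      (nhdsWithin (x : ℂ) (({(x : ℂ)} : Set ℂ))ᶜ) := by
    rw [tendsto_nhdsWithin_iff]
    constructor
    · exact (Complex.continuous_ofReal.continuousAt).mono_left nhdsWithin_le_nhds
    · filter_upwards [self_mem_nhdsWithin] with y hy
      simp only [Set.mem_compl_iff, Set.mem_singleton_iff] at hy ⊢
      exact fun hc => hy (Complex.ofReal_injective hc)
  have hfreq : ∃ᶠ z in nhdsWithin (x : ℂ) (({(x : ℂ)} : Set ℂ))ᶜ, g z = 0 := by
    have hx' : ∃ᶠ y : ℝ in nhdsWithin x (({x} : Set ℝ)ᶜ), g (y : ℂ) = 0 := by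
      rw [frequently_nhdsWithin_iff]
      refine hx.mono fun y hy => ?_
      exact ⟨hz y hy.2.1, hy.1⟩
    exact htendsto.frequently hx'
  have := hg.eqOn_zero_of_preconnected_of_frequently_eq_zero isPreconnected_univ
    (Set.mem_univ (x : ℂ)) hfreq
  intro z
  exact this (Set.mem_univ z)

/-- If an entire function `f : ℂ × ℂ → ℂ` is such that its set of real zeros
`{(s,t) ∈ ℝ × ℝ : f (s,t) = 0}` has positive two-dimensional Lebesgue measure,
then `f` is identically zero on `ℂ²`. -/
theorem entire_eq_zero_of_real_zeros_pos_measure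
    (f : ℂ × ℂ → ℂ) (hf : AnalyticOnNhd ℂ f Set.univ)
    (h : 0 < volume {p : ℝ × ℝ | f ((p.1 : ℂ), (p.2 : ℂ)) = 0}) :
    ∀ z : ℂ × ℂ, f z = 0 := by
  have hfc : Continuous f := continuousOn_univ.1 hf.continuousOn
  set A : Set (ℝ × ℝ) := {p : ℝ × ℝ | f ((p.1 : ℂ), (p.2 : ℂ)) = 0} with hA
  have hAmeas : MeasurableSet A := by
    have : IsClosed A := isClosed_eq
      (hfc.comp ((Complex.continuous_ofReal.comp continuous_fst).prodMk
        (Complex.continuous_ofReal.comp continuous_snd))) continuous_const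
    exact this.measurableSet
  -- Fubini: the set of s with positive-measure slice is non-null
  have hprod : ¬ (volume.prod volume) A = 0 := by
    rw [← Measure.volume_eq_prod]
    exact ne_of_gt h
  rw [Measure.measure_prod_null hAmeas] at hprod
  set S : Set ℝ := {s : ℝ | volume (Prod.mk s ⁻¹' A) ≠ 0} with hSdef
  have hSpos : 0 < volume S := by
    rw [Filter.EventuallyEq, Filter.eventually_iff, mem_ae_iff] at hprod
    have : volume S ≠ 0 := by
      intro hc
      apply hprod
      convert hc using 2
      rfl
    exact pos_iff_ne_zero.2 this
  -- for each s ∈ S, f (s, ·) vanishes identically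
  have hstep1 : ∀ s ∈ S, ∀ w : ℂ, f ((s : ℂ), w) = 0 := by
    intro s hs w
    have hg : AnalyticOnNhd ℂ (fun w : ℂ => f ((s : ℂ), w)) Set.univ := by
      intro z _
      exact (hf ((s : ℂ), z) trivial).comp (analyticAt_const.prod analyticAt_id)
    have hTpos : 0 < volume {t : ℝ | f ((s : ℂ), (t : ℂ)) = 0} := by
      have : Prod.mk s ⁻¹' A = {t : ℝ | f ((s : ℂ), (t : ℂ)) = 0} := rfl
      exact pos_iff_ne_zero.2 (this ▸ hs)
    exact aux_entire_eq_zero _ hg _ hTpos (fun t ht => ht) w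
  -- now for each w, f (·, w) vanishes on S, hence identically
  intro z
  obtain ⟨u, w⟩ := z
  have hg : AnalyticOnNhd ℂ (fun v : ℂ => f (v, w)) Set.univ := by
    intro y _
    have hinner : AnalyticAt ℂ (fun v : ℂ => (v, w)) y :=
      analyticAt_id.prod analyticAt_const
    refine AnalyticAt.comp ?_ hinner
    exact hf (y, w) trivial
  exact aux_entire_eq_zero _ hg S hSpos (fun s hs => hstep1 s hs w) u
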